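/- Let U = [A;B] be an invertible n×n matrix over a field F with A of size r×n and B of size (n−r)×n, where 2r > n, and let U⁻¹ = (C | D) with C of size n×r and D of size n×(n−r). Set t = 2r − n, let B₁ be the r×n matrix obtained by stacking the t×n zero matrix on top of B, and write C = (X | C₁) where C₁ consists of the last n−r columns of C. Then over F[z]: (i) (A + B₁z)·(D − C₁z) = 0, so D − C₁z is a control matrix of the memory-1 convolutional code generated by G(z) = A + B₁z; and (ii) (A + B₁z)·C = I_r, so G(z) has a right polynomial inverse and the code is non-catastrophic. -/

import Mathlib

/-- Let `U = [A; B]` be an invertible `n × n` matrix with `A` of size `r × n`,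
`B` of size `(n-r) × n`, `2r > n`, and `U⁻¹ = (C | D)`. With `t = 2r - n`,
`B₁ = [0_{t×n}; B]` and `C₁` the last `n - r` columns of `C`, over `F[z]`:
(i) `(A + B₁z) * (D - C₁z) = 0`, so `D - C₁z` is a control matrix of the
memory-1 convolutional code generated by `G(z) = A + B₁z`; and
(ii) `(A + B₁z) * C = I_r`, so `G(z)` has a right polynomial inverse and the
code is non-catastrophic. -/
theorem stmt_16 {F : Type*} [Field F] {n r : ℕ}
    (hrn : r ≤ n) (h2r : n < 2 * r)
    (A : Matrix (Fin r) (Fin n) F) (B : Matrix (Fin (n - r)) (Fin n) F)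
    (C : Matrix (Fin n) (Fin r) F) (D : Matrix (Fin n) (Fin (n - r)) F)
    (hUV : Matrix.fromRows A B * Matrix.fromCols C D = 1)
    (hVU : Matrix.fromCols C D * Matrix.fromRows A B = 1)
    (B₁ : Matrix (Fin r) (Fin n) F)
    (hB₁ : ∀ (i : Fin r) (j : Fin n), B₁ i j =
      if h : (i : ℕ) < 2 * r - n then 0
      else B ⟨(i : ℕ) - (2 * r - n), by have := i.isLt; omega⟩ j)
    (C₁ : Matrix (Fin n) (Fin (n - r)) F)
    (hC₁ : ∀ (i : Fin n) (j : Fin (n - r)), C₁ i j =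
      C i ⟨2 * r - n + (j : ℕ), by have := j.isLt; omega⟩) :
    (A.map Polynomial.C + (Polynomial.X : Polynomial F) • B₁.map Polynomial.C) *
      (D.map Polynomial.C - (Polynomial.X : Polynomial F) • C₁.map Polynomial.C) = 0 ∧
    (A.map Polynomial.C + (Polynomial.X : Polynomial F) • B₁.map Polynomial.C) *
      C.map Polynomial.C = 1 := by
  -- extract the block identities
  rw [Matrix.fromRows_mul_fromCols, ← Matrix.fromBlocks_one] at hUV
  obtain ⟨hAC, hAD, hBC, hBD⟩ := Matrix.fromBlocks_inj.mp hUV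
  -- key identities over F
  have key1 : A * C₁ = B₁ * D := by
    ext i j
    have hl : (A * C₁) i j = (A * C) i ⟨2 * r - n + (j : ℕ), by have := j.isLt; omega⟩ := by
      simp [Matrix.mul_apply, hC₁]
    rw [hl, hAC, Matrix.one_apply]
    rw [Matrix.mul_apply]
    by_cases hi : (i : ℕ) < 2 * r - n
    · rw [if_neg (by simp [Fin.ext_iff]; omega)]
      symm
      apply Finset.sum_eq_zero
      intro k _
      rw [hB₁]
      simp [hi]
    · have hr : ∑ k, B₁ i k * D k j
          = (B * D) ⟨(i : ℕ) - (2 * r - n), by have := i.isLt; omega⟩ j := by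
        rw [Matrix.mul_apply]
        apply Finset.sum_congr rfl
        intro k _
        rw [hB₁]
        simp [hi]
      rw [hr, hBD, Matrix.one_apply]
      simp only [Fin.ext_iff]
      have := i.isLt; have := j.isLt
      by_cases h : (i : ℕ) = 2 * r - n + (j : ℕ) <;>
        [rw [if_pos h, if_pos (by omega)]; rw [if_neg h, if_neg (by omega)]]
  have key2 : B₁ * C₁ = 0 := by
    ext i j
    rw [Matrix.mul_apply, Matrix.zero_apply]
    by_cases hi : (i : ℕ) < 2 * r - n
    · apply Finset.sum_eq_zero
      intro k _
      rw [hB₁]; simp [hi]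
    · have hr : ∑ k, B₁ i k * C₁ k j
          = (B * C) ⟨(i : ℕ) - (2 * r - n), by have := i.isLt; omega⟩
              ⟨2 * r - n + (j : ℕ), by have := j.isLt; omega⟩ := by
        rw [Matrix.mul_apply]
        apply Finset.sum_congr rfl
        intro k _
        rw [hB₁, hC₁]
        simp [hi]
      rw [hr, hBC, Matrix.zero_apply]
  have key3 : B₁ * C = 0 := by
    ext i j
    rw [Matrix.mul_apply, Matrix.zero_apply]
    by_cases hi : (i : ℕ) < 2 * r - n
    · apply Finset.sum_eq_zero
      intro k _
      rw [hB₁]; simp [hi]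
    · have hr : ∑ k, B₁ i k * C k j
          = (B * C) ⟨(i : ℕ) - (2 * r - n), by have := i.isLt; omega⟩ j := by
        rw [Matrix.mul_apply]
        apply Finset.sum_congr rfl
        intro k _
        rw [hB₁]; simp [hi]
      rw [hr, hBC, Matrix.zero_apply]
  -- lift to polynomials
  set φ := (Polynomial.C : F →+* Polynomial F)
  have m1 : A.map φ * D.map φ = 0 := by
    rw [← Matrix.map_mul, hAD]; ext i j; simp [φ]
  have m2 : A.map φ * C₁.map φ = B₁.map φ * D.map φ := by
    rw [← Matrix.map_mul, ← Matrix.map_mul, key1]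
  have m3 : B₁.map φ * C₁.map φ = 0 := by
    rw [← Matrix.map_mul, key2]; ext i j; simp [φ]
  have m4 : B₁.map φ * C.map φ = 0 := by
    rw [← Matrix.map_mul, key3]; ext i j; simp [φ]
  have m5 : A.map φ * C.map φ = 1 := by
    rw [← Matrix.map_mul, hAC]; ext i j; simp [φ, Matrix.one_apply, apply_ite]
  constructor
  · simp only [Matrix.add_mul, Matrix.mul_sub, Matrix.smul_mul, Matrix.mul_smul,
      m1, m2, m3, smul_zero]
    abel
  · simp only [Matrix.add_mul, Matrix.smul_mul, m4, m5, smul_zero, add_zero]
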